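/- arXiv:1402.1674 — 2 statements merged into one kernel-verified Lean document; each statement's English description precedes it below -/
import Mathlib

section
/- In a type-based two-strategy count game, for every Nash equilibrium profile a : Fin N → Bool there exists another Nash equilibrium profile ā : Fin N → Bool with the same number of players choosing each strategy (#{i : ā i = true} = #{i : a i = true}) and in which at most one type is mixed: there exists a type t* ∈ Fin T such that for every type t ≠ t* and all players i, j with τ(i) = τ(j) = t, one has ā(i) = ā(j). -/
/-- Number of players choosing strategy `s` in profile `a`. -/
def muCount {N : ℕ} (a : Fin N → Bool) (s : Bool) : ℕ :=
  (Finset.univ.filter fun j => a j = s).card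

/-- Nash equilibrium of a type-based two-strategy count game: `P t s m` is the payoff
of a type-`t` player choosing strategy `s` when `m` players in total (including itself)
choose `s`; no player can strictly improve by unilaterally switching strategy. -/
def isNE {N T : ℕ} (τ : Fin N → Fin T) (P : Fin T → Bool → ℕ → ℝ)
    (a : Fin N → Bool) : Prop :=
  ∀ i : Fin N, P (τ i) (!(a i)) (muCount a (!(a i)) + 1) ≤ P (τ i) (a i) (muCount a (a i))

/-- lexicographic-ish key: type first, then index -/
def gkey {N T : ℕ} (τ : Fin N → Fin T) (i : Fin N) : ℕ := (τ i).val * N + i.val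

lemma gkey_le {N T : ℕ} (τ : Fin N → Fin T) {i j : Fin N}
    (h : gkey τ i ≤ gkey τ j) : (τ i).val ≤ (τ j).val := by
  by_contra hc
  push_neg at hc
  have h1 : ((τ j).val + 1) * N ≤ (τ i).val * N := Nat.mul_le_mul_right N hc
  have hj : j.val < N := j.isLt
  have : gkey τ j < gkey τ i := by
    unfold gkey
    have : ((τ j).val + 1) * N = (τ j).val * N + N := by ring
    omega
  omega

lemma gkey_inj {N T : ℕ} (τ : Fin N → Fin T) : Function.Injective (gkey τ) := by
  intro i j hij
  have h1 := gkey_le τ hij.le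
  have h2 := gkey_le τ hij.ge
  have hτ : (τ i).val = (τ j).val := le_antisymm h1 h2
  unfold gkey at hij
  rw [hτ] at hij
  exact Fin.ext (by omega)

lemma muCount_total {N : ℕ} (b : Fin N → Bool) : muCount b true + muCount b false = N := by
  classical
  have h := Finset.card_filter_add_card_filter_not
    (s := (Finset.univ : Finset (Fin N))) (p := fun j => b j = true)
  have h2 : (Finset.univ.filter fun j => ¬ (b j = true)) =
      (Finset.univ.filter fun j => b j = false) := by
    apply Finset.filter_congr
    intro j _
    simp
  rw [h2] at h
  simpa [muCount, Finset.card_univ] using h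

/-- In a type-based two-strategy count game, for every Nash equilibrium
`a` there is another Nash equilibrium `ā` with the same number of players choosing each
strategy and in which at most one type is mixed: there is a type `t*` such that for any
type `t ≠ t*`, all players of type `t` use the same strategy in `ā`. -/
theorem stmt6 (N T : ℕ) (hT : 0 < T) (τ : Fin N → Fin T) (P : Fin T → Bool → ℕ → ℝ)
    (a : Fin N → Bool) (ha : isNE τ P a) :
    ∃ abar : Fin N → Bool,
      isNE τ P abar ∧
      muCount abar true = muCount a true ∧
      ∃ tstar : Fin T, ∀ t : Fin T, t ≠ tstar →
        ∀ i j : Fin N, τ i = t → τ j = t → abar i = abar j := by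
  classical
  set Mixed : Fin T → Prop :=
    fun t => (∃ i, τ i = t ∧ a i = true) ∧ (∃ i, τ i = t ∧ a i = false) with hMdef
  set S : Finset (Fin N) := Finset.univ.filter (fun i => Mixed (τ i)) with hSdef
  have hmemS : ∀ i : Fin N, i ∈ S ↔ Mixed (τ i) := by
    intro i; simp [hSdef]
  set m : ℕ := (S.filter (fun i => a i = true)).card with hmdef
  have hmS : m ≤ S.card := Finset.card_filter_le _ _
  set r : Fin N → Fin N → Prop := fun i j => gkey τ i ≤ gkey τ j with hrdef
  haveI : DecidableRel r := fun i j => by unfold r; infer_instance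
  haveI : IsTrans (Fin N) r := ⟨fun a b c hab hbc => le_trans hab hbc⟩
  haveI : IsAntisymm (Fin N) r := ⟨fun a b hab hba => gkey_inj τ (le_antisymm hab hba)⟩
  haveI : IsTotal (Fin N) r := ⟨fun a b => le_total _ _⟩
  set l : List (Fin N) := S.sort r with hldef
  have hl_sorted : List.Pairwise r l := Finset.pairwise_sort S r
  have hl_nodup : l.Nodup := Finset.sort_nodup S r
  have hl_mem : ∀ i, i ∈ l ↔ i ∈ S := fun i => Finset.mem_sort r
  have hl_len : l.length = S.card := Finset.length_sort r
  set B : Finset (Fin N) := (l.take m).toFinset with hBdef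
  have htake_nodup : (l.take m).Nodup := hl_nodup.sublist (List.take_sublist m l)
  have hBcard : B.card = m := by
    rw [hBdef, List.card_toFinset, htake_nodup.dedup, List.length_take]
    omega
  have hmemB : ∀ i, i ∈ B ↔ i ∈ l.take m := by
    intro i; simp [hBdef]
  have hBS : B ⊆ S := by
    intro i hi
    exact (hl_mem i).1 (List.mem_of_mem_take ((hmemB i).1 hi))
  have hcross : ∀ i ∈ B, ∀ j ∈ S, j ∉ B → (τ i).val ≤ (τ j).val := by
    intro i hi j hjS hjB
    have hi' : i ∈ l.take m := (hmemB i).1 hi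
    have hj' : j ∈ l.drop m := by
      have hjl : j ∈ l := (hl_mem j).2 hjS
      rw [← List.take_append_drop m l, List.mem_append] at hjl
      rcases hjl with h | h
      · exact absurd ((hmemB j).2 h) hjB
      · exact h
    have hp := hl_sorted
    rw [← List.take_append_drop m l, List.pairwise_append] at hp
    exact gkey_le τ (hp.2.2 i hi' j hj')
  set abar : Fin N → Bool := fun i => if i ∈ S then decide (i ∈ B) else a i with habar
  have habar_in : ∀ i ∈ S, abar i = decide (i ∈ B) := by
    intro i hi; simp [habar, hi]
  have habar_out : ∀ i, i ∉ S → abar i = a i := by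
    intro i hi; simp [habar, hi]
  -- counts
  have hmu_true : muCount abar true = muCount a true := by
    have split : ∀ b : Fin N → Bool,
        muCount b true = (S.filter fun i => b i = true).card
          + (Sᶜ.filter fun i => b i = true).card := by
      intro b
      unfold muCount
      rw [← Finset.union_compl S, Finset.filter_union]
      exact Finset.card_union_of_disjoint
        (Finset.disjoint_filter_filter disjoint_compl_right)
    have h1 : (S.filter fun i => abar i = true) = B := by
      ext i
      simp only [Finset.mem_filter]
      constructor
      · rintro ⟨hiS, hib⟩
        rw [habar_in i hiS] at hib
        simpa using hib
      · intro hiB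
        refine ⟨hBS hiB, ?_⟩
        rw [habar_in i (hBS hiB)]
        simpa using hiB
    have h2 : (Sᶜ.filter fun i => abar i = true) = (Sᶜ.filter fun i => a i = true) := by
      apply Finset.filter_congr
      intro i hi
      rw [habar_out i (by simpa using hi)]
    rw [split abar, split a, h1, h2, hBcard, hmdef]
  have hmu : ∀ s, muCount abar s = muCount a s := by
    intro s
    have t1 := muCount_total abar
    have t2 := muCount_total a
    cases s
    · omega
    · exact hmu_true
  have hNE : isNE τ P abar := by
    intro i
    rw [hmu, hmu]
    by_cases hiS : i ∈ S
    · have hMix : Mixed (τ i) := (hmemS i).1 hiS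
      obtain ⟨j, hj1, hj2⟩ : ∃ j, τ j = τ i ∧ a j = abar i := by
        cases h : abar i
        · obtain ⟨j, hjt, hja⟩ := hMix.2
          exact ⟨j, hjt, hja⟩
        · obtain ⟨j, hjt, hja⟩ := hMix.1
          exact ⟨j, hjt, hja⟩
      have := ha j
      rw [hj1, hj2] at this
      exact this
    · rw [habar_out i hiS]
      exact ha i
  -- pure types are unanimous
  have hpure : ∀ t, ¬ Mixed t → ∀ i j, τ i = t → τ j = t → abar i = abar j := by
    intro t hMix i j hit hjt
    have hiS : i ∉ S := fun h => hMix (hit ▸ (hmemS i).1 h)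
    have hjS : j ∉ S := fun h => hMix (hjt ▸ (hmemS j).1 h)
    rw [habar_out i hiS, habar_out j hjS]
    by_contra hne
    cases hi : a i <;> cases hj : a j <;> rw [hi, hj] at hne <;> try exact hne rfl
    · exact hMix ⟨⟨j, hjt, hj⟩, ⟨i, hit, hi⟩⟩
    · exact hMix ⟨⟨i, hit, hi⟩, ⟨j, hjt, hj⟩⟩
  refine ⟨abar, hNE, hmu_true, ?_⟩
  by_cases hex : ∃ t : Fin T, (∃ i ∈ B, τ i = t) ∧ ∃ j ∈ S, j ∉ B ∧ τ j = t
  · obtain ⟨t0, ⟨i0, hi0B, hi0t⟩, j0, hj0S, hj0B, hj0t⟩ := hex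
    refine ⟨t0, ?_⟩
    intro t ht i j hit hjt
    by_cases hMix : Mixed t
    · have hiS : i ∈ S := (hmemS i).2 (hit ▸ hMix)
      have hjS : j ∈ S := (hmemS j).2 (hjt ▸ hMix)
      rw [habar_in i hiS, habar_in j hjS]
      by_contra hne
      have hiff : ¬ (i ∈ B ↔ j ∈ B) := fun hif => hne (decide_eq_decide.mpr hif)
      have key : t = t0 := by
        rcases Classical.em (i ∈ B) with hiB | hiB
        · have hjB : j ∉ B := fun h => hiff ⟨fun _ => h, fun _ => hiB⟩
          have h1 : (τ i0).val ≤ (τ j).val := hcross i0 hi0B j hjS hjB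
          have h2 : (τ i).val ≤ (τ j0).val := hcross i hiB j0 hj0S hj0B
          rw [hi0t, hjt] at h1
          rw [hit, hj0t] at h2
          exact Fin.ext (le_antisymm h2 h1)
        · have hjB : j ∈ B := by
            by_contra hjB
            exact hiff ⟨fun h => absurd h hiB, fun h => absurd h hjB⟩
          have h1 : (τ i0).val ≤ (τ i).val := hcross i0 hi0B i hiS hiB
          have h2 : (τ j).val ≤ (τ j0).val := hcross j hjB j0 hj0S hj0B
          rw [hi0t, hit] at h1
          rw [hjt, hj0t] at h2
          exact Fin.ext (le_antisymm h2 h1)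
      exact ht key
    · exact hpure t hMix i j hit hjt
  · refine ⟨⟨0, hT⟩, ?_⟩
    intro t ht i j hit hjt
    by_cases hMix : Mixed t
    · have hiS : i ∈ S := (hmemS i).2 (hit ▸ hMix)
      have hjS : j ∈ S := (hmemS j).2 (hjt ▸ hMix)
      rw [habar_in i hiS, habar_in j hjS]
      have hiff : (i ∈ B ↔ j ∈ B) := by
        constructor
        · intro hiB
          by_contra hjB
          exact hex ⟨t, ⟨i, hiB, hit⟩, j, hjS, hjB, hjt⟩
        · intro hjB
          by_contra hiB
          exact hex ⟨t, ⟨j, hjB, hjt⟩, i, hiS, hiB, hit⟩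
      exact decide_eq_decide.mpr hiff
    · exact hpure t hMix i j hit hjt
end

section
/- In a type-based two-strategy count game, suppose a : Fin N → Bool is a Nash equilibrium and ā : Fin N → Bool is a profile such that #{i : ā i = true} = #{i : a i = true} and, for every player i, there exists a player j with τ(j) = τ(i) and a(j) = ā(i) (i.e., every (type, strategy) pair occupied in ā is already occupied in a). Then ā is also a Nash equilibrium. -/
/-- In a type-based two-strategy count game, if `a` is a Nash
equilibrium and `ā` is a profile with the same number of players choosing `true` such
that every (type, strategy) pair occupied in `ā` is already occupied in `a`
(for every player `i` there is a player `j` with `τ j = τ i` and `a j = ā i`),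
then `ā` is also a Nash equilibrium. -/
theorem stmt7 (N T : ℕ) (τ : Fin N → Fin T) (P : Fin T → Bool → ℕ → ℝ)
    (a abar : Fin N → Bool) (ha : isNE τ P a)
    (hcount : muCount abar true = muCount a true)
    (hocc : ∀ i : Fin N, ∃ j : Fin N, τ j = τ i ∧ a j = abar i) :
    isNE τ P abar := by
  have hsum : ∀ b : Fin N → Bool, muCount b false + muCount b true = N := by
    intro b
    unfold muCount
    rw [← Finset.card_union_of_disjoint]
    · have : (Finset.filter (fun j => b j = false) Finset.univ ∪ Finset.filter (fun j => b j = true) Finset.univ) = Finset.univ := by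
        ext x
        cases h : b x <;> simp [h]
      rw [this]
      simp
    · simp [Finset.disjoint_filter]
  have hmu : ∀ s : Bool, muCount abar s = muCount a s := by
    intro s
    cases s
    · have := hsum abar
      have := hsum a
      omega
    · exact hcount
  intro i
  obtain ⟨j, hτ, hj⟩ := hocc i
  have := ha j
  rw [hτ, hj] at this
  rw [hmu, hmu]
  exact this
end
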